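/- Let A be a finite set of nonzero vectors spanning a complex vector space V with nondegenerate symmetric form, satisfying the ∨-conditions. Then the assignment t_α ↦ α∨⊗α (for α ∈ A) defines a representation of the holonomy Lie algebra of the arrangement: for every 2-dimensional subspace Π of the span of A and every α ∈ A∩Π, the operator α∨⊗α commutes with Σ_{β∈A∩Π} β∨⊗β. -/
import Mathlib


open Classical in
/-- For a ∨-system `A` (covectors in `V*`, with `α^∨` the `G`-dual vectors of the
canonical form `G = Σ_{α∈A} α⊗α`, and the ∨-conditions expressed as
`Σ_{β∈A∩Π} β(α^∨) β^∨ = ν α^∨`), the assignment `t_α ↦ α^∨⊗α` defines a representation of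
the holonomy Lie algebra: `α^∨⊗α` commutes with `Σ_{β∈A∩Π} β^∨⊗β` for every 2-plane `Π`
and every `α ∈ A∩Π`. -/
theorem stmt_19 (V : Type*) [AddCommGroup V] [Module ℂ V] [FiniteDimensional ℂ V]
    (A : Finset (Module.Dual ℂ V)) (h0 : (0 : Module.Dual ℂ V) ∉ A)
    (hspan : Submodule.span ℂ (A : Set (Module.Dual ℂ V)) = ⊤)
    (vee : Module.Dual ℂ V → V)
    (hvee : ∀ α ∈ A, ∑ β ∈ A, β (vee α) • β = α)
    (hvc : ∀ P : Submodule ℂ (Module.Dual ℂ V), Module.finrank ℂ P = 2 →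
      ∀ α ∈ A, α ∈ P → ∃ ν : ℂ,
        ∑ β ∈ A.filter (fun β => β ∈ P), β (vee α) • vee β = ν • vee α) :
    ∀ P : Submodule ℂ (Module.Dual ℂ V), Module.finrank ℂ P = 2 →
      ∀ α ∈ A, α ∈ P →
        Commute (α.smulRight (vee α))
          (∑ β ∈ A.filter (fun β => β ∈ P), β.smulRight (vee β)) := by
  intro P hP α hα hαP
  obtain ⟨ν, hν⟩ := hvc P hP α hα hαP
  -- symmetry of the canonical form: β(vee γ) = γ(vee β) for β, γ ∈ A
  have hsym : ∀ β ∈ A, ∀ γ ∈ A, β (vee γ) = γ (vee β) := by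
    intro β hβ γ hγ
    have h1 := congrArg (fun f : Module.Dual ℂ V => f (vee γ)) (hvee β hβ)
    have h2 := congrArg (fun f : Module.Dual ℂ V => f (vee β)) (hvee γ hγ)
    simp only [LinearMap.coe_sum, Finset.sum_apply, LinearMap.smul_apply,
      smul_eq_mul] at h1 h2
    rw [← h1, ← h2]
    exact Finset.sum_congr rfl fun _ _ => mul_comm _ _
  -- covector version of the ∨-condition, obtained by applying x ↦ ∑ γ∈A, γ(x) • γ to hν
  have key2 : ∑ β ∈ A.filter (fun β => β ∈ P), β (vee α) • β = ν • α := by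
    calc ∑ β ∈ A.filter (fun β => β ∈ P), β (vee α) • β
        = ∑ β ∈ A.filter (fun β => β ∈ P), β (vee α) • ∑ γ ∈ A, γ (vee β) • γ := by
          refine Finset.sum_congr rfl fun β hβ => ?_
          rw [hvee β (Finset.mem_filter.mp hβ).1]
      _ = ∑ γ ∈ A, (γ (∑ β ∈ A.filter (fun β => β ∈ P), β (vee α) • vee β)) • γ := by
          simp only [Finset.smul_sum, smul_smul, map_sum, map_smul, smul_eq_mul,
            Finset.sum_smul]
          rw [Finset.sum_comm]
      _ = ∑ γ ∈ A, (ν * γ (vee α)) • γ := by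
          refine Finset.sum_congr rfl fun γ _ => ?_
          rw [hν, map_smul, smul_eq_mul]
      _ = ν • α := by
          conv_rhs => rw [← hvee α hα]
          rw [Finset.smul_sum]
          exact Finset.sum_congr rfl fun γ _ => by rw [smul_smul]
  -- prove the commutation pointwise
  have hS : ∀ y : V, (∑ β ∈ A.filter (fun β => β ∈ P), β.smulRight (vee β)) y
      = ∑ β ∈ A.filter (fun β => β ∈ P), β y • vee β := fun y => by
    simp [LinearMap.sum_apply]
  refine LinearMap.ext fun x => ?_
  rw [Module.End.mul_apply, Module.End.mul_apply, hS, LinearMap.smulRight_apply, hS,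
    LinearMap.smulRight_apply]
  -- left side: α(∑ β(x) • vee β) • vee α = (ν * α x) • vee α
  have hl : α (∑ β ∈ A.filter (fun β => β ∈ P), β x • vee β) = ν * α x := by
    rw [map_sum]
    have hc : ∀ β ∈ A.filter (fun β => β ∈ P), α (β x • vee β) = β (vee α) * β x := by
      intro β hβ
      rw [map_smul, smul_eq_mul, hsym α hα β (Finset.mem_filter.mp hβ).1, mul_comm]
    rw [Finset.sum_congr rfl hc]
    have hkx := congrArg (fun f : Module.Dual ℂ V => f x) key2
    simp only [LinearMap.coe_sum, Finset.sum_apply, LinearMap.smul_apply,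
      smul_eq_mul] at hkx
    exact hkx
  rw [hl]
  -- right side: ∑ β(α x • vee α) • vee β = (ν * α x) • vee α
  refine Eq.symm ?_
  calc ∑ β ∈ A.filter (fun β => β ∈ P), β (α x • vee α) • vee β
      = α x • ∑ β ∈ A.filter (fun β => β ∈ P), β (vee α) • vee β := by
        rw [Finset.smul_sum]
        refine Finset.sum_congr rfl fun β _ => ?_
        rw [map_smul, smul_eq_mul, ← smul_smul]
    _ = (ν * α x) • vee α := by rw [hν, smul_smul, mul_comm]
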